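/- For t ∈ ℝ let G_{ij}(t) = u_i(t)·v_j(t) − u_j(t)·v_i(t) for 1 ≤ i < j ≤ 6, where u(t) = (−t, 0, t, 3, 2t, 3) and v(t) = (0, 1, t, 2, t, 1). Then for all integers a, b, c and all 1 ≤ i < j < k ≤ 6: if a·G_{jk}(√3) − b·G_{ik}(√3) + c·G_{ij}(√3) = 0, then a·G_{jk}(t) − b·G_{ik}(t) + c·G_{ij}(t) = 0 for every real t ≠ 0. -/
import Mathlib

/-- `u t = (-t, 0, t, 3, 2t, 3)`, the first basis vector of the plane `E_t` (12-fold family). -/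
noncomputable def u12 (t : ℝ) : Fin 6 → ℝ := ![-t, 0, t, 3, 2 * t, 3]

/-- `v t = (0, 1, t, 2, t, 1)`, the second basis vector of the plane `E_t` (12-fold family). -/
noncomputable def v12 (t : ℝ) : Fin 6 → ℝ := ![0, 1, t, 2, t, 1]

/-- Grassmann coordinates of `E_t`. -/
noncomputable def G12 (t : ℝ) (i j : Fin 6) : ℝ := u12 t i * v12 t j - u12 t j * v12 t i

private lemma key17 (p q : ℤ) (h : (p:ℝ) + (q:ℝ) * Real.sqrt 3 = 0) : (p:ℝ) = 0 ∧ (q:ℝ) = 0 := by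
  have h3 : Irrational (Real.sqrt 3) := (Nat.prime_three).irrational_sqrt
  rcases eq_or_ne q 0 with hq | hq
  · subst hq; simp at h ⊢; exact h
  · exfalso
    apply h3
    refine ⟨(-p)/q, ?_⟩
    have hq' : (q:ℝ) ≠ 0 := Int.cast_ne_zero.mpr hq
    push_cast
    field_simp
    linarith

private lemma sq3' : Real.sqrt 3 ^ 2 = 3 := Real.sq_sqrt (by norm_num)

private lemma cons5 (x0 x1 x2 x3 x4 x5 : ℝ) : ![x0,x1,x2,x3,x4,x5] 5 = x5 := rfl

theorem stmt_17 (a b c : ℤ) (i j k : Fin 6) (hij : i < j) (hjk : j < k)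
    (h : (a : ℝ) * G12 (Real.sqrt 3) j k - (b : ℝ) * G12 (Real.sqrt 3) i k
        + (c : ℝ) * G12 (Real.sqrt 3) i j = 0) :
    ∀ t : ℝ, t ≠ 0 → (a : ℝ) * G12 t j k - (b : ℝ) * G12 t i k + (c : ℝ) * G12 t i j = 0 := by
  intro t ht
  fin_cases i <;> fin_cases j <;> fin_cases k <;>
    simp only [Fin.isValue, Fin.mk_lt_mk] at hij hjk <;>
    first
      | omega
      | (simp [G12, u12, v12, cons5] at h ⊢;
         ring_nf at h ⊢;
         try simp only [sq3'] at h)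
  · -- 0 1 2
    obtain ⟨h1, h2⟩ := key17 (3*b) (-(a+c)) (by push_cast; linarith [h])
    push_cast at h1 h2
    linear_combination (t*t/3) * h1 + t * h2
  · -- 0 1 3
    obtain ⟨h1, h2⟩ := key17 (-(3*a)) (2*b-c) (by push_cast; linarith [h])
    push_cast at h1 h2
    linear_combination 1 * h1 + t * h2
  · -- 0 1 4
    obtain ⟨h1, h2⟩ := key17 (3*b) (-(2*a)-c) (by push_cast; linarith [h])
    push_cast at h1 h2
    linear_combination (t*t/3) * h1 + t * h2
  · -- 0 1 5
    obtain ⟨h1, h2⟩ := key17 (-(3*a)) (b-c) (by push_cast; linarith [h])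
    push_cast at h1 h2
    linear_combination 1 * h1 + t * h2
  · -- 0 2 3
    obtain ⟨h1, h2⟩ := key17 (-(3*c)) (-a+2*b) (by push_cast; linarith [h])
    push_cast at h1 h2
    linear_combination (t*t/3) * h1 + t * h2
  · -- 0 2 4
    linear_combination (t*t/3) * h
  · -- 0 2 5
    obtain ⟨h1, h2⟩ := key17 (-(3*c)) (-(2*a)+b) (by push_cast; linarith [h])
    push_cast at h1 h2
    linear_combination (t*t/3) * h1 + t * h2
  · -- 0 3 4
    obtain ⟨h1, h2⟩ := key17 (3*b) (-a-2*c) (by push_cast; linarith [h])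
    push_cast at h1 h2
    linear_combination (t*t/3) * h1 + t * h2
  · -- 0 3 5
    obtain ⟨h1, h2⟩ := key17 (-(3*a)) (b-2*c) (by push_cast; linarith [h])
    push_cast at h1 h2
    linear_combination 1 * h1 + t * h2
  · -- 0 4 5
    obtain ⟨h1, h2⟩ := key17 (-(3*c)) (-a+b) (by push_cast; linarith [h])
    push_cast at h1 h2
    linear_combination (t*t/3) * h1 + t * h2
  · -- 1 2 3
    obtain ⟨h1, h2⟩ := key17 (3*b) (-a-c) (by push_cast; linarith [h])
    push_cast at h1 h2
    linear_combination 1 * h1 + t * h2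
  · -- 1 2 4
    obtain ⟨h1, h2⟩ := key17 (-(3*a)) (2*b-c) (by push_cast; linarith [h])
    push_cast at h1 h2
    linear_combination (t*t/3) * h1 + t * h2
  · -- 1 2 5
    obtain ⟨h1, h2⟩ := key17 (3*b) (-(2*a)-c) (by push_cast; linarith [h])
    push_cast at h1 h2
    linear_combination 1 * h1 + t * h2
  · -- 1 3 4
    obtain ⟨h1, h2⟩ := key17 (-(3*c)) (-a+2*b) (by push_cast; linarith [h])
    push_cast at h1 h2
    linear_combination 1 * h1 + t * h2
  · -- 1 3 5
    linear_combination h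
  · -- 1 4 5
    obtain ⟨h1, h2⟩ := key17 (3*b) (-a-2*c) (by push_cast; linarith [h])
    push_cast at h1 h2
    linear_combination 1 * h1 + t * h2
  · -- 2 3 4
    obtain ⟨h1, h2⟩ := key17 (3*b) (-a-c) (by push_cast; linarith [h])
    push_cast at h1 h2
    linear_combination (t*t/3) * h1 + t * h2
  · -- 2 3 5
    obtain ⟨h1, h2⟩ := key17 (-(3*a)) (2*b-c) (by push_cast; linarith [h])
    push_cast at h1 h2
    linear_combination 1 * h1 + t * h2
  · -- 2 4 5
    obtain ⟨h1, h2⟩ := key17 (-(3*c)) (-a+2*b) (by push_cast; linarith [h])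
    push_cast at h1 h2
    linear_combination (t*t/3) * h1 + t * h2
  · -- 3 4 5
    obtain ⟨h1, h2⟩ := key17 (3*b) (-a-c) (by push_cast; linarith [h])
    push_cast at h1 h2
    linear_combination 1 * h1 + t * h2
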